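/- arXiv:2006.14303 — 2 statements merged into one kernel-verified Lean document; each statement's English description precedes it below -/
import Mathlib

section
/- (Mirror-descent descent inequality toward the minimizer.) Let f : ℝ^d → ℝ be convex, differentiable, and L_f-strongly smooth, achieving its minimum at z* ∈ S where S ⊆ ℝ^d is convex. Let ψ be differentiable and σ-strongly convex with Bregman distance D_ψ, let η > 0, and let z⁺ ∈ S satisfy the variational optimality condition ⟨η ∇f(z) + ∇ψ(z⁺) − ∇ψ(z), w − z⁺⟩ ≥ 0 for all w ∈ S (i.e., z⁺ is the mirror-descent update of z ∈ S). Then D_ψ(z*, z⁺) ≤ D_ψ(z*, z) + (1/2)(η L_f − σ)‖z⁺ − z‖². -/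
open scoped RealInnerProductSpace

/-- First-order condition for a differentiable convex function. -/
lemma convex_first_order {d : ℕ}
    (f : EuclideanSpace ℝ (Fin d) → ℝ) (f' : EuclideanSpace ℝ (Fin d) → EuclideanSpace ℝ (Fin d))
    (hfconv : ConvexOn ℝ Set.univ f)
    (hf : ∀ x, HasGradientAt f (f' x) x)
    (x y : EuclideanSpace ℝ (Fin d)) :
    f x + ⟪f' x, y - x⟫ ≤ f y := by
  set g : ℝ → ℝ := fun t => f (AffineMap.lineMap x y t) with hg
  have hgconv : ConvexOn ℝ Set.univ g := by
    have := hfconv.comp_affineMap (AffineMap.lineMap x y : ℝ →ᵃ[ℝ] EuclideanSpace ℝ (Fin d))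
    simp only [Set.preimage_univ] at this
    exact this
  have hline : HasDerivAt (fun t : ℝ => (AffineMap.lineMap x y t : EuclideanSpace ℝ (Fin d)))
      (y - x) 0 := by
    have heq : (fun t : ℝ => (AffineMap.lineMap x y t : EuclideanSpace ℝ (Fin d)))
        = fun t : ℝ => t • (y - x) + x := by
      funext t
      simp [AffineMap.lineMap_apply_module, smul_sub, sub_smul]
      module
    rw [heq]
    simpa using ((hasDerivAt_id (0 : ℝ)).smul_const (y - x)).add_const x
  have hfd : HasFDerivAt f (InnerProductSpace.toDual ℝ _ (f' x)) x :=
    (hasGradientAt_iff_hasFDerivAt.mp (hf x))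
  have hgd : HasDerivAt g ⟪f' x, y - x⟫ 0 := by
    have h0 : (AffineMap.lineMap x y (0 : ℝ) : EuclideanSpace ℝ (Fin d)) = x := by simp
    have := (h0 ▸ hfd).comp_hasDerivAt 0 hline
    simp [InnerProductSpace.toDual_apply_apply] at this
    exact this
  have hslope := hgconv.le_slope_of_hasDerivAt (Set.mem_univ (0 : ℝ))
    (Set.mem_univ (1 : ℝ)) one_pos hgd
  have : ⟪f' x, y - x⟫ ≤ g 1 - g 0 := by simpa [slope_def_field] using hslope
  have hg0 : g 0 = f x := by simp [hg]
  have hg1 : g 1 = f y := by simp [hg]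
  rw [hg0, hg1] at this
  linarith

/-- Mirror-descent descent inequality toward the minimizer. -/
theorem mirror_descent_toward_minimizer {d : ℕ}
    (S : Set (EuclideanSpace ℝ (Fin d))) (hS : Convex ℝ S)
    (f : EuclideanSpace ℝ (Fin d) → ℝ) (f' : EuclideanSpace ℝ (Fin d) → EuclideanSpace ℝ (Fin d))
    (hfconv : ConvexOn ℝ Set.univ f)
    (hf : ∀ x, HasGradientAt f (f' x) x)
    (Lf : ℝ) (hLf : 0 < Lf)
    (hss : ∀ z₁ z₂ : EuclideanSpace ℝ (Fin d),
      f z₂ ≤ f z₁ + ⟪f' z₁, z₂ - z₁⟫ + (Lf / 2) * ‖z₂ - z₁‖ ^ 2)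
    (zstar : EuclideanSpace ℝ (Fin d)) (hzstarS : zstar ∈ S)
    (hmin : ∀ w, f zstar ≤ f w)
    (ψ : EuclideanSpace ℝ (Fin d) → ℝ) (ψ' : EuclideanSpace ℝ (Fin d) → EuclideanSpace ℝ (Fin d))
    (hψ : ∀ x, HasGradientAt ψ (ψ' x) x)
    (D : EuclideanSpace ℝ (Fin d) → EuclideanSpace ℝ (Fin d) → ℝ)
    (hD : ∀ z₁ z₂, D z₁ z₂ = ψ z₁ - ψ z₂ - ⟪ψ' z₂, z₁ - z₂⟫)
    (σ : ℝ) (hσ : 0 < σ)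
    (hstrong : ∀ z₁ z₂ : EuclideanSpace ℝ (Fin d), (σ / 2) * ‖z₁ - z₂‖ ^ 2 ≤ D z₁ z₂)
    (η : ℝ) (hη : 0 < η)
    (z zplus : EuclideanSpace ℝ (Fin d)) (hz : z ∈ S) (hzplus : zplus ∈ S)
    (hopt : ∀ w ∈ S, (0 : ℝ) ≤ ⟪η • f' z + ψ' zplus - ψ' z, w - zplus⟫) :
    D zstar zplus ≤ D zstar z + (1 / 2) * (η * Lf - σ) * ‖zplus - z‖ ^ 2 := by
  have h1 := hopt zstar hzstarS
  have h2 := convex_first_order f f' hfconv hf z zstar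
  have h3 := hss z zplus
  have h4 := hmin zplus
  have h5 := hstrong zplus z
  -- key bound: ⟪f' z, zstar - zplus⟫ ≤ (Lf/2) ‖zplus - z‖²
  have hgsum : ⟪f' z, zstar - zplus⟫ = ⟪f' z, zstar - z⟫ - ⟪f' z, zplus - z⟫ := by
    rw [← inner_sub_right]; congr 1; abel
  have hkey : ⟪f' z, zstar - zplus⟫ ≤ (Lf / 2) * ‖zplus - z‖ ^ 2 := by
    rw [hgsum]; linarith
  have hkey' : η * ⟪f' z, zstar - zplus⟫ ≤ η * ((Lf / 2) * ‖zplus - z‖ ^ 2) :=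
    mul_le_mul_of_nonneg_left hkey hη.le
  have h1' : 0 ≤ η * ⟪f' z, zstar - zplus⟫ + ⟪ψ' zplus, zstar - zplus⟫
      - ⟪ψ' z, zstar - zplus⟫ := by
    simp only [inner_add_left, inner_sub_left, real_inner_smul_left] at h1
    linarith
  rw [hD zstar zplus, hD zstar z]
  rw [hD zplus z] at h5
  -- three-point identity pieces
  have e1 : ⟪ψ' z, zstar - z⟫ = ⟪ψ' z, zstar - zplus⟫ + ⟪ψ' z, zplus - z⟫ := by
    rw [← inner_add_right]; congr 1; abel
  nlinarith [h5, h1', hkey', e1]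
end

section
/- (Per-step mirror-descent regret inequality.) Let f : ℝ^d → ℝ be convex and differentiable, S ⊆ ℝ^d convex, ψ differentiable and σ-strongly convex with Bregman distance D_ψ, η > 0, z ∈ S, and let z⁺ ∈ S satisfy ⟨η ∇f(z) + ∇ψ(z⁺) − ∇ψ(z), w − z⁺⟩ ≥ 0 for all w ∈ S. Then for every comparator z^c ∈ S: η (f(z) − f(z^c)) ≤ D_ψ(z^c, z) − D_ψ(z^c, z⁺) + (η²/(2σ)) ‖∇f(z)‖². -/
open scoped RealInnerProductSpace

/-- Gradient inequality for a convex differentiable function. -/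
lemma grad_ineq_aux {d : ℕ} (f : EuclideanSpace ℝ (Fin d) → ℝ)
    (hfconv : ConvexOn ℝ Set.univ f) {g z y : EuclideanSpace ℝ (Fin d)}
    (hf : HasGradientAt f g z) : ⟪g, y - z⟫ ≤ f y - f z := by
  set v := y - z with hv
  have hzv : z + v = y := by rw [hv]; abel
  have hline : ∀ t : ℝ, HasDerivAt (fun t : ℝ => z + t • v) v t := by
    intro t
    simpa using ((hasDerivAt_id t).smul_const v).const_add z
  have hfd : HasFDerivAt f ((InnerProductSpace.toDual ℝ (EuclideanSpace ℝ (Fin d))) g)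
      (z + (0:ℝ) • v) := by simpa using hf.hasFDerivAt
  have hg : HasDerivAt (fun t : ℝ => f (z + t • v)) ⟪g, v⟫ 0 := by
    have := hfd.comp_hasDerivAt 0 (hline 0)
    simp [InnerProductSpace.toDual] at this
    exact this
  have hconv : ConvexOn ℝ Set.univ (fun t : ℝ => f (z + t • v)) := by
    have heq : (fun t : ℝ => f (z + t • v)) = f ∘ (AffineMap.lineMap z y) := by
      funext t
      simp only [Function.comp_apply, AffineMap.lineMap_apply_module, hv]
      congr 1
      module
    rw [heq]
    exact (hfconv.comp_affineMap _).subset (by simp) convex_univ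
  have hs := hconv.le_slope_of_hasDerivAt (Set.mem_univ 0) (Set.mem_univ 1) one_pos hg
  simp only [slope, one_smul, zero_smul, add_zero, sub_zero, vsub_eq_sub, smul_eq_mul,
    inv_one, one_mul] at hs
  rw [hzv] at hs
  exact hs

/-- Per-step mirror-descent regret inequality. -/
theorem mirror_descent_per_step_regret {d : ℕ}
    (S : Set (EuclideanSpace ℝ (Fin d))) (hS : Convex ℝ S)
    (f : EuclideanSpace ℝ (Fin d) → ℝ) (f' : EuclideanSpace ℝ (Fin d) → EuclideanSpace ℝ (Fin d))
    (hfconv : ConvexOn ℝ Set.univ f)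
    (hf : ∀ x, HasGradientAt f (f' x) x)
    (ψ : EuclideanSpace ℝ (Fin d) → ℝ) (ψ' : EuclideanSpace ℝ (Fin d) → EuclideanSpace ℝ (Fin d))
    (hψ : ∀ x, HasGradientAt ψ (ψ' x) x)
    (D : EuclideanSpace ℝ (Fin d) → EuclideanSpace ℝ (Fin d) → ℝ)
    (hD : ∀ z₁ z₂, D z₁ z₂ = ψ z₁ - ψ z₂ - ⟪ψ' z₂, z₁ - z₂⟫)
    (σ : ℝ) (hσ : 0 < σ)
    (hstrong : ∀ z₁ z₂ : EuclideanSpace ℝ (Fin d), (σ / 2) * ‖z₁ - z₂‖ ^ 2 ≤ D z₁ z₂)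
    (η : ℝ) (hη : 0 < η)
    (z zplus : EuclideanSpace ℝ (Fin d)) (hz : z ∈ S) (hzplus : zplus ∈ S)
    (hopt : ∀ w ∈ S, (0 : ℝ) ≤ ⟪η • f' z + ψ' zplus - ψ' z, w - zplus⟫) :
    ∀ zc ∈ S, η * (f z - f zc) ≤ D zc z - D zc zplus + (η ^ 2 / (2 * σ)) * ‖f' z‖ ^ 2 := by
  intro zc hzc
  -- gradient inequality (convexity of f)
  have h1 : ⟪f' z, zc - z⟫ ≤ f zc - f z := grad_ineq_aux f hfconv (hf z)
  -- optimality condition at zc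
  have h2 := hopt zc hzc
  -- strong convexity
  have h3 := hstrong zplus z
  -- Cauchy-Schwarz
  have hcs : ⟪f' z, z - zplus⟫ ≤ ‖f' z‖ * ‖z - zplus‖ := real_inner_le_norm _ _
  -- Young's inequality
  have hyoung : η * ⟪f' z, z - zplus⟫ ≤ η ^ 2 / (2 * σ) * ‖f' z‖ ^ 2 + σ / 2 * ‖z - zplus‖ ^ 2 := by
    have hid : η ^ 2 / (2 * σ) * ‖f' z‖ ^ 2 + σ / 2 * ‖z - zplus‖ ^ 2
        - η * (‖f' z‖ * ‖z - zplus‖) = (η * ‖f' z‖ - σ * ‖z - zplus‖) ^ 2 / (2 * σ) := by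
      field_simp
      ring
    have hpos : (0:ℝ) ≤ (η * ‖f' z‖ - σ * ‖z - zplus‖) ^ 2 / (2 * σ) := by positivity
    have hmul := mul_le_mul_of_nonneg_left hcs hη.le
    linarith
  have hnorm : ‖zplus - z‖ = ‖z - zplus‖ := norm_sub_rev _ _
  rw [hnorm] at h3
  rw [hD zplus z] at h3
  rw [hD zc z, hD zc zplus]
  simp only [inner_sub_left, inner_add_left, inner_sub_right, real_inner_smul_left]
    at h1 h2 h3 hyoung ⊢
  have hm := mul_le_mul_of_nonneg_left h1 hη.le
  nlinarith [hm]
end
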